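/- Let X_1, …, X_n (n ≥ 2) be jointly distributed random variables on finite alphabets, and let γ be a fractional partition with respect to a family 𝓕 of subsets of [n] satisfying the standing assumptions. Define the truncated family 𝓕̃ = {F ∩ [n−1] : F ∈ 𝓕} (with multiplicity) and the weights γ̃(F ∩ [n−1]) = γ(F). Then (𝓕̃, γ̃)-MI(X_1; …; X_{n−1}) ≤ (𝓕, γ)-MI(X_1; …; X_n) ≤ (𝓕̃, γ̃)-MI(X_1; …; X_{n−1}) + I(X_n ; X_{[n−1]}). -/
import Mathlib

open Finset
open scoped Classical BigOperators

set_option linter.unusedSectionVars false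
set_option linter.unusedVariables false

/-- Entropy of the marginal of `p` on the coordinates in `F`
    (`H(X_F) = ∑ negMulLog (p_F)`, with `0 log 0 = 0`). -/
noncomputable def Hent {n : ℕ} {𝒳 : Fin n → Type} [∀ i, Fintype (𝒳 i)]
    (p : (∀ i, 𝒳 i) → ℝ) (F : Finset (Fin n)) : ℝ :=
  ∑ y : (i : {i // i ∈ F}) → 𝒳 i.1,
    Real.negMulLog
      (∑ x ∈ Finset.univ.filter (fun x : ∀ i, 𝒳 i => ∀ i : {i // i ∈ F}, x i.1 = y i), p x)

namespace EntAux

variable {n : ℕ} {𝒳 : Fin n → Type} [∀ i, Fintype (𝒳 i)]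

/-- The marginal pmf on coordinates `F`. -/
noncomputable def Pm (p : (∀ i, 𝒳 i) → ℝ) (F : Finset (Fin n))
    (y : (i : {i // i ∈ F}) → 𝒳 i.1) : ℝ :=
  ∑ x ∈ Finset.univ.filter (fun x : ∀ i, 𝒳 i => ∀ i : {i // i ∈ F}, x i.1 = y i), p x

lemma Hent_eq (p : (∀ i, 𝒳 i) → ℝ) (F : Finset (Fin n)) :
    Hent p F = ∑ y, Real.negMulLog (Pm p F y) := rfl

/-- Restriction of a full configuration to `F`. -/
def rest (F : Finset (Fin n)) (x : ∀ i, 𝒳 i) : (i : {i // i ∈ F}) → 𝒳 i.1 := fun i => x i.1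

/-- Restriction from a larger index set to a smaller one. -/
def down {A B : Finset (Fin n)} (h : A ⊆ B) (z : (i : {i // i ∈ B}) → 𝒳 i.1) :
    (i : {i // i ∈ A}) → 𝒳 i.1 := fun i => z ⟨i.1, h i.2⟩

lemma Pm_eq (p : (∀ i, 𝒳 i) → ℝ) (F : Finset (Fin n)) (y : (i : {i // i ∈ F}) → 𝒳 i.1) :
    Pm p F y = ∑ x ∈ Finset.univ.filter (fun x => rest F x = y), p x := by
  unfold Pm
  congr 1
  apply Finset.filter_congr
  intro x _
  simp [rest, funext_iff]

lemma Pm_nonneg (p : (∀ i, 𝒳 i) → ℝ) (hp0 : ∀ x, 0 ≤ p x) (F : Finset (Fin n))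
    (y : (i : {i // i ∈ F}) → 𝒳 i.1) : 0 ≤ Pm p F y :=
  Finset.sum_nonneg fun x _ => hp0 x

lemma Pm_total (p : (∀ i, 𝒳 i) → ℝ) (F : Finset (Fin n)) :
    ∑ y, Pm p F y = ∑ x, p x := by
  simp_rw [Pm_eq]
  exact Finset.sum_fiberwise Finset.univ (rest F) p

lemma Pm_marg (p : (∀ i, 𝒳 i) → ℝ) {A B : Finset (Fin n)} (h : A ⊆ B)
    (y : (i : {i // i ∈ A}) → 𝒳 i.1) :
    Pm p A y = ∑ z ∈ Finset.univ.filter (fun z => down h z = y), Pm p B z := by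
  rw [Pm_eq]
  rw [← Finset.sum_fiberwise_of_maps_to (g := rest B)
      (t := Finset.univ.filter (fun z => down h z = y)) ?hmap p]
  case hmap =>
    intro x hx
    simp only [Finset.mem_filter, Finset.mem_univ, true_and] at hx ⊢
    exact hx
  apply Finset.sum_congr rfl
  intro z hz
  simp only [Finset.mem_filter, Finset.mem_univ, true_and] at hz
  rw [Pm_eq]
  congr 1
  ext x
  simp only [Finset.mem_filter, Finset.mem_univ, true_and]
  constructor
  · rintro ⟨_, h2⟩; exact h2
  · intro h2
    refine ⟨?_, h2⟩
    subst h2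
    exact hz


lemma Pm_sum_comp (p : (∀ i, 𝒳 i) → ℝ) {A B : Finset (Fin n)} (h : A ⊆ B)
    (f : ((i : {i // i ∈ A}) → 𝒳 i.1) → ℝ) :
    ∑ z, Pm p B z * f (down h z) = ∑ y, Pm p A y * f y := by
  rw [← Finset.sum_fiberwise Finset.univ (down h) (fun z => Pm p B z * f (down h z))]
  apply Finset.sum_congr rfl
  intro y _
  rw [Pm_marg p h y, Finset.sum_mul]
  apply Finset.sum_congr rfl
  intro z hz
  simp only [Finset.mem_filter] at hz
  rw [hz.2]

lemma Pm_le (p : (∀ i, 𝒳 i) → ℝ) (hp0 : ∀ x, 0 ≤ p x) {A B : Finset (Fin n)} (h : A ⊆ B)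
    (z : (i : {i // i ∈ B}) → 𝒳 i.1) : Pm p B z ≤ Pm p A (down h z) := by
  rw [Pm_marg p h (down h z)]
  refine Finset.single_le_sum (f := fun z => Pm p B z)
    (fun z' _ => Pm_nonneg p hp0 B z') ?_
  simp

lemma Hent_eq_sum (p : (∀ i, 𝒳 i) → ℝ) {A B : Finset (Fin n)} (h : A ⊆ B) :
    Hent p A = -∑ z, Pm p B z * Real.log (Pm p A (down h z)) := by
  rw [Hent_eq, Pm_sum_comp p h (fun y => Real.log (Pm p A y))]
  simp [Real.negMulLog, neg_mul, Finset.sum_neg_distrib]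

lemma down_refl {A : Finset (Fin n)} (h : A ⊆ A) (z : (i : {i // i ∈ A}) → 𝒳 i.1) :
    down h z = z := rfl

/-- Glue configurations on `C` and `D` to one on `C ∪ D`. -/
def glue {C D : Finset (Fin n)} (yC : (i : {i // i ∈ C}) → 𝒳 i.1)
    (yD : (i : {i // i ∈ D}) → 𝒳 i.1) : (i : {i // i ∈ C ∪ D}) → 𝒳 i.1 :=
  fun i => if h : i.1 ∈ C then yC ⟨i.1, h⟩
    else yD ⟨i.1, ((Finset.mem_union.mp i.2).resolve_left h)⟩

lemma key_factor (p : (∀ i, 𝒳 i) → ℝ) (C D : Finset (Fin n))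
    (w : (i : {i // i ∈ C ∩ D}) → 𝒳 i.1) :
    ∑ z ∈ Finset.univ.filter (fun z => down (Finset.inter_subset_union) z = w),
        Pm p C (down Finset.subset_union_left z) * Pm p D (down Finset.subset_union_right z)
      = Pm p (C ∩ D) w * Pm p (C ∩ D) w := by
  rw [show Pm p (C ∩ D) w * Pm p (C ∩ D) w
      = (∑ yC ∈ Finset.univ.filter (fun yC => down Finset.inter_subset_left yC = w), Pm p C yC)
        * (∑ yD ∈ Finset.univ.filter (fun yD => down Finset.inter_subset_right yD = w), Pm p D yD)
      from by rw [← Pm_marg p Finset.inter_subset_left w, ← Pm_marg p Finset.inter_subset_right w],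
    Finset.sum_mul_sum]
  rw [← Finset.sum_product']
  refine Finset.sum_nbij'
    (fun z => (down Finset.subset_union_left z, down Finset.subset_union_right z))
    (fun q => glue q.1 q.2) ?_ ?_ ?_ ?_ ?_
  · intro z hz
    simp only [Finset.mem_filter, Finset.mem_univ, true_and, Finset.mem_product] at hz ⊢
    exact ⟨hz, hz⟩
  · intro q hq
    simp only [Finset.mem_filter, Finset.mem_univ, true_and, Finset.mem_product] at hq ⊢
    funext i
    show glue q.1 q.2 ⟨i.1, _⟩ = w i
    simp only [glue]; rw [dif_pos (Finset.mem_of_mem_inter_left i.2)]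
    exact congrFun hq.1 ⟨i.1, i.2⟩
  · intro z hz
    funext i
    simp only [glue]
    split
    · rfl
    · rfl
  · intro q hq
    simp only [Finset.mem_filter, Finset.mem_univ, true_and, Finset.mem_product] at hq
    ext i
    · show glue q.1 q.2 ⟨i.1, _⟩ = q.1 i
      simp only [glue]; rw [dif_pos i.2]
    · show glue q.1 q.2 ⟨i.1, _⟩ = q.2 i
      simp only [glue]
      split
      · next h =>
        have hmem : i.1 ∈ C ∩ D := Finset.mem_inter.mpr ⟨h, i.2⟩
        have h1 : q.1 ⟨i.1, h⟩ = w ⟨i.1, hmem⟩ := congrFun hq.1 ⟨i.1, hmem⟩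
        have h2 : q.2 ⟨i.1, i.2⟩ = w ⟨i.1, hmem⟩ := congrFun hq.2 ⟨i.1, hmem⟩
        rw [h1, ← h2]
      · rfl
  · intro z hz
    rfl


lemma sum_b (p : (∀ i, 𝒳 i) → ℝ) (hp1 : ∑ x, p x = 1) (C D : Finset (Fin n)) :
    ∑ z : (i : {i // i ∈ C ∪ D}) → 𝒳 i.1,
      (if Pm p (C ∩ D) (down Finset.inter_subset_union z) = 0 then 0
       else Pm p C (down Finset.subset_union_left z) * Pm p D (down Finset.subset_union_right z)
            / Pm p (C ∩ D) (down Finset.inter_subset_union z)) = 1 := by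
  rw [← Finset.sum_fiberwise Finset.univ (down (Finset.inter_subset_union (s := C) (t := D)))]
  rw [← hp1, ← Pm_total p (C ∩ D)]
  apply Finset.sum_congr rfl
  intro w _
  by_cases h0 : Pm p (C ∩ D) w = 0
  · rw [h0]
    apply Finset.sum_eq_zero
    intro z hz
    simp only [Finset.mem_filter, Finset.mem_univ, true_and] at hz
    rw [hz, if_pos h0]
  · have : ∀ z ∈ Finset.univ.filter
        (fun z => down (Finset.inter_subset_union (s := C) (t := D)) z = w),
        (if Pm p (C ∩ D) (down Finset.inter_subset_union z) = 0 then 0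
         else Pm p C (down Finset.subset_union_left z) * Pm p D (down Finset.subset_union_right z)
              / Pm p (C ∩ D) (down Finset.inter_subset_union z))
        = Pm p C (down Finset.subset_union_left z) * Pm p D (down Finset.subset_union_right z)
          / Pm p (C ∩ D) w := by
      intro z hz
      simp only [Finset.mem_filter, Finset.mem_univ, true_and] at hz
      rw [hz, if_neg h0]
    rw [Finset.sum_congr rfl this, ← Finset.sum_div, key_factor p C D w]
    field_simp


lemma gibbs_pt (a c d e : ℝ) (ha0 : 0 ≤ a) (hac : a ≤ c) (had : a ≤ d) (hae : a ≤ e)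
    (hc0 : 0 ≤ c) (hd0 : 0 ≤ d) (he0 : 0 ≤ e) :
    a - (if e = 0 then 0 else c * d / e) ≤
      a * Real.log a + a * Real.log e - a * Real.log c - a * Real.log d := by
  by_cases haz : a = 0
  · have hb0 : (0:ℝ) ≤ (if e = 0 then 0 else c * d / e) := by
      split
      · exact le_refl 0
      · positivity
    rw [haz]
    simp only [zero_mul, Real.log_zero, mul_zero, zero_sub, add_zero, sub_zero, zero_add]
    linarith
  · have ha' : 0 < a := lt_of_le_of_ne ha0 (Ne.symm haz)
    have hc' : 0 < c := lt_of_lt_of_le ha' hac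
    have hd' : 0 < d := lt_of_lt_of_le ha' had
    have he' : 0 < e := lt_of_lt_of_le ha' hae
    rw [if_neg he'.ne']
    set b : ℝ := c * d / e with hbz
    have hb' : 0 < b := by rw [hbz]; positivity
    have hlog : Real.log (b / a) ≤ b / a - 1 :=
      Real.log_le_sub_one_of_pos (by positivity)
    have hrw : a * Real.log a + a * Real.log e - a * Real.log c - a * Real.log d
        = -(a * Real.log (b / a)) := by
      rw [Real.log_div hb'.ne' ha'.ne', hbz,
        Real.log_div (mul_pos hc' hd').ne' he'.ne',
        Real.log_mul hc'.ne' hd'.ne']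
      ring
    rw [hrw]
    have h2 : a * Real.log (b / a) ≤ a * (b / a - 1) :=
      mul_le_mul_of_nonneg_left hlog ha0
    have h3 : a * (b / a - 1) = b - a := by field_simp
    linarith

theorem Hent_submodular (p : (∀ i, 𝒳 i) → ℝ) (hp0 : ∀ x, 0 ≤ p x) (hp1 : ∑ x, p x = 1)
    (C D : Finset (Fin n)) :
    Hent p (C ∪ D) + Hent p (C ∩ D) ≤ Hent p C + Hent p D := by
  set U := C ∪ D with hU
  have hCU : C ⊆ U := Finset.subset_union_left
  have hDU : D ⊆ U := Finset.subset_union_right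
  have hIU : C ∩ D ⊆ U := Finset.inter_subset_union
  set a : ((i : {i // i ∈ U}) → 𝒳 i.1) → ℝ := fun z => Pm p U z with ha
  set c : ((i : {i // i ∈ U}) → 𝒳 i.1) → ℝ := fun z => Pm p C (down hCU z) with hc
  set d : ((i : {i // i ∈ U}) → 𝒳 i.1) → ℝ := fun z => Pm p D (down hDU z) with hd
  set e : ((i : {i // i ∈ U}) → 𝒳 i.1) → ℝ := fun z => Pm p (C ∩ D) (down hIU z) with he
  set b : ((i : {i // i ∈ U}) → 𝒳 i.1) → ℝ :=
    fun z => if e z = 0 then 0 else c z * d z / e z with hb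
  have h1 : Hent p C = -∑ z, a z * Real.log (c z) := Hent_eq_sum p hCU
  have h2 : Hent p D = -∑ z, a z * Real.log (d z) := Hent_eq_sum p hDU
  have h3 : Hent p (C ∩ D) = -∑ z, a z * Real.log (e z) := Hent_eq_sum p hIU
  have h4 : Hent p U = -∑ z, a z * Real.log (a z) :=
    Hent_eq_sum p (Finset.Subset.refl U)
  have hsum_b : ∑ z, b z = 1 := sum_b p hp1 C D
  have hsum_a : ∑ z, a z = 1 := by rw [ha]; rw [Pm_total p U, hp1]
  have hpt : ∀ z, a z - b z ≤
      a z * Real.log (a z) + a z * Real.log (e z)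
        - a z * Real.log (c z) - a z * Real.log (d z) := by
    intro z
    exact gibbs_pt (a z) (c z) (d z) (e z)
      (Pm_nonneg p hp0 U z) (Pm_le p hp0 hCU z) (Pm_le p hp0 hDU z) (Pm_le p hp0 hIU z)
      (Pm_nonneg p hp0 C _) (Pm_nonneg p hp0 D _) (Pm_nonneg p hp0 (C ∩ D) _)
  have hkey : ∑ z, (a z * Real.log (a z) + a z * Real.log (e z)
      - a z * Real.log (c z) - a z * Real.log (d z))
      = (∑ z, a z * Real.log (a z)) + (∑ z, a z * Real.log (e z))
        - (∑ z, a z * Real.log (c z)) - (∑ z, a z * Real.log (d z)) := by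
    rw [Finset.sum_sub_distrib, Finset.sum_sub_distrib, Finset.sum_add_distrib]
  have hge : ∑ z, (a z - b z) ≤ ∑ z, (a z * Real.log (a z) + a z * Real.log (e z)
      - a z * Real.log (c z) - a z * Real.log (d z)) :=
    Finset.sum_le_sum fun z _ => hpt z
  rw [Finset.sum_sub_distrib, hsum_a, hsum_b] at hge
  rw [hkey] at hge
  linarith


lemma Hent_empty (p : (∀ i, 𝒳 i) → ℝ) (hp1 : ∑ x, p x = 1) :
    Hent p (∅ : Finset (Fin n)) = 0 := by
  unfold Hent
  have h1 : ∀ y : (i : {i // i ∈ (∅ : Finset (Fin n))}) → 𝒳 i.1,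
      (∑ x ∈ Finset.univ.filter
        (fun x : ∀ i, 𝒳 i => ∀ i : {i // i ∈ (∅ : Finset (Fin n))}, x i.1 = y i), p x) = 1 := by
    intro y
    rw [Finset.filter_true_of_mem (fun x _ => fun i => absurd i.2 (Finset.notMem_empty i.1))]
    exact hp1
  simp only [h1]
  simp [Real.negMulLog]


end EntAux


theorem stmt_18 (n : ℕ) (hn : 2 ≤ n)
    (𝒳 : Fin n → Type) [∀ i, Fintype (𝒳 i)] [∀ i, Nonempty (𝒳 i)]
    (p : (∀ i, 𝒳 i) → ℝ)
    (hp0 : ∀ x, 0 ≤ p x) (hp1 : ∑ x : ∀ i, 𝒳 i, p x = 1)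
    (ι : Type) [Fintype ι] (S : ι → Finset (Fin n)) (γ : ι → ℝ)
    (hproper : ∀ k, S k ≠ Finset.univ)
    (hpos : ∀ k, 0 < γ k)
    (hsep : ∀ i j : Fin n, i ≠ j → ¬ (∀ k, i ∈ S k ↔ j ∈ S k))
    (hfrac : ∀ i : Fin n, ∑ k ∈ Finset.univ.filter (fun k => i ∈ S k), γ k = 1)
    (ln : Fin n) (hln : ln = ⟨n - 1, by omega⟩) :
    ((∑ k : ι, γ k * Hent p ((S k).erase ln)) - Hent p (Finset.univ.erase ln) ≤
        (∑ k : ι, γ k * Hent p (S k)) - Hent p Finset.univ) ∧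
    ((∑ k : ι, γ k * Hent p (S k)) - Hent p Finset.univ ≤
        ((∑ k : ι, γ k * Hent p ((S k).erase ln)) - Hent p (Finset.univ.erase ln)) +
        (Hent p {ln} + Hent p (Finset.univ.erase ln) - Hent p Finset.univ)) := by
  classical
  set c : ℝ := Hent p Finset.univ - Hent p (Finset.univ.erase ln) with hcdef
  set m : ℝ := Hent p {ln} with hmdef
  have claim_lo : ∀ k, ln ∈ S k →
      c ≤ Hent p (S k) - Hent p ((S k).erase ln) := by
    intro k hk
    have hu : S k ∪ Finset.univ.erase ln = Finset.univ := by
      ext a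
      by_cases ha : a = ln <;> simp [ha, hk]
    have hi : S k ∩ Finset.univ.erase ln = (S k).erase ln := by
      ext a
      simp [Finset.mem_erase, Finset.mem_inter, and_comm]
    have := EntAux.Hent_submodular p hp0 hp1 (S k) (Finset.univ.erase ln)
    rw [hu, hi] at this
    rw [hcdef]
    linarith
  have claim_hi : ∀ k, ln ∈ S k →
      Hent p (S k) - Hent p ((S k).erase ln) ≤ m := by
    intro k hk
    have hu : (S k).erase ln ∪ {ln} = S k := by
      ext a
      by_cases ha : a = ln <;> simp [ha, hk]
    have hi : (S k).erase ln ∩ {ln} = ∅ := by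
      ext a
      simp only [Finset.mem_inter, Finset.mem_erase, Finset.mem_singleton,
        Finset.notMem_empty, iff_false]
      rintro ⟨⟨h1, _⟩, h2⟩
      exact h1 h2
    have := EntAux.Hent_submodular p hp0 hp1 ((S k).erase ln) {ln}
    rw [hu, hi, EntAux.Hent_empty p hp1] at this
    rw [hmdef]
    linarith
  have hzero : ∀ k, ln ∉ S k → Hent p (S k) - Hent p ((S k).erase ln) = 0 := by
    intro k hk
    rw [Finset.erase_eq_of_notMem hk]
    ring
  have hsplit : ∑ k : ι, γ k * (Hent p (S k) - Hent p ((S k).erase ln))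
      = ∑ k ∈ Finset.univ.filter (fun k => ln ∈ S k),
          γ k * (Hent p (S k) - Hent p ((S k).erase ln)) := by
    rw [← Finset.sum_filter_add_sum_filter_not Finset.univ (fun k => ln ∈ S k)]
    have h2 : ∑ k ∈ Finset.univ.filter (fun k => ¬ ln ∈ S k),
        γ k * (Hent p (S k) - Hent p ((S k).erase ln)) = 0 := by
      apply Finset.sum_eq_zero
      intro k hk
      simp only [Finset.mem_filter, Finset.mem_univ, true_and] at hk
      rw [hzero k hk, mul_zero]
    rw [h2, add_zero]
  have hDlo : c ≤ ∑ k : ι, γ k * (Hent p (S k) - Hent p ((S k).erase ln)) := by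
    rw [hsplit]
    calc c = ∑ k ∈ Finset.univ.filter (fun k => ln ∈ S k), γ k * c := by
            rw [← Finset.sum_mul, hfrac ln]; ring
      _ ≤ _ := Finset.sum_le_sum fun k hk => by
            simp only [Finset.mem_filter, Finset.mem_univ, true_and] at hk
            exact mul_le_mul_of_nonneg_left (claim_lo k hk) (hpos k).le
  have hDhi : ∑ k : ι, γ k * (Hent p (S k) - Hent p ((S k).erase ln)) ≤ m := by
    rw [hsplit]
    calc ∑ k ∈ Finset.univ.filter (fun k => ln ∈ S k),
          γ k * (Hent p (S k) - Hent p ((S k).erase ln))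
        ≤ ∑ k ∈ Finset.univ.filter (fun k => ln ∈ S k), γ k * m :=
          Finset.sum_le_sum fun k hk => by
            simp only [Finset.mem_filter, Finset.mem_univ, true_and] at hk
            exact mul_le_mul_of_nonneg_left (claim_hi k hk) (hpos k).le
      _ = m := by rw [← Finset.sum_mul, hfrac ln]; ring
  have hexp : ∑ k : ι, γ k * (Hent p (S k) - Hent p ((S k).erase ln))
      = (∑ k : ι, γ k * Hent p (S k)) - ∑ k : ι, γ k * Hent p ((S k).erase ln) := by
    rw [← Finset.sum_sub_distrib]
    apply Finset.sum_congr rfl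
    intro k _
    ring
  rw [hexp] at hDlo hDhi
  constructor
  · rw [hcdef] at hDlo; linarith
  · rw [hmdef] at hDhi; linarith
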